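/- arXiv:2505.11389 — 3 statements merged into one kernel-verified Lean document; each statement's English description precedes it below -/
import Mathlib

section
/- Let Z be a measurable space, m ≥ 1, and let h_1,…,h_m : M(Z) → ℝ be functions. Then for every q ≥ 1, every z_1,…,z_q ∈ Z and every χ ∈ M(Z), D^{(q)}_{z_1,…,z_q}(∏_{i=1}^m h_i)(χ) = Σ_{W} Q(D^{[W]}_{z_1,…,z_q}(h_1,…,h_m))(χ), where the sum runs over all words W = (A_1,…,A_q) of length q in the alphabet of nonempty subsets of [m]. -/
open MeasureTheory ProbabilityTheory ENNReal

noncomputable section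

/-- The add-one cost operator `D_z^+`: `(D_z f)(χ) = f(χ + δ_z) - f(χ)`. -/
def addOneCost {Z : Type*} [MeasurableSpace Z] (f : Measure Z → ℝ) (z : Z) :
    Measure Z → ℝ :=
  fun χ => f (χ + Measure.dirac z) - f χ

/-- Iterated add-one cost operator `D^{(q)}_{z_1,…,z_q}`. -/
def iterD {Z : Type*} [MeasurableSpace Z] :
    (q : ℕ) → (Fin q → Z) → (Measure Z → ℝ) → Measure Z → ℝ
  | 0, _, f => f
  | q + 1, z, f => addOneCost (iterD q (fun i => z i.succ) f) (z 0)

/-- `η` is a Poisson random measure on `Z` with intensity `μ`, under the probability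
measure `P`. -/
structure IsPoissonRM {Z Ω : Type*} [MeasurableSpace Z] [MeasurableSpace Ω]
    (P : Measure Ω) (η : Ω → Measure Z) (μ : Measure Z) : Prop where
  meas : ∀ B : Set Z, MeasurableSet B → Measurable fun ω => η ω B
  indep : ∀ (n : ℕ) (B : Fin n → Set Z), (∀ i, MeasurableSet (B i)) →
    Pairwise (Function.onFun Disjoint B) →
    iIndepFun (fun i ω => η ω (B i)) P
  poisson : ∀ B : Set Z, MeasurableSet B → μ B < ⊤ → ∀ n : ℕ,
    P {ω | η ω B = n} =
      ENNReal.ofReal (Real.exp (-(μ B).toReal) * (μ B).toReal ^ n / n.factorial)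
  ae_top : ∀ B : Set Z, MeasurableSet B → μ B = ⊤ → ∀ᵐ ω ∂P, η ω B = ⊤

/-- The operator `D_z^A` acting on `m`-tuples of functionals. -/
def tupleD {Z : Type*} [MeasurableSpace Z] {m : ℕ} (z : Z) (A : Finset (Fin m))
    (F : Fin m → Measure Z → ℝ) : Fin m → Measure Z → ℝ :=
  fun i => if i ∈ A then addOneCost (F i) z else F i

/-- The iterated word operator `D^{[W]}_{z_1,…,z_q}` for a word `W = (A_1,…,A_q)`. -/
def wordD {Z : Type*} [MeasurableSpace Z] {m : ℕ} :
    (q : ℕ) → (Fin q → Z) → (Fin q → Finset (Fin m)) →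
      (Fin m → Measure Z → ℝ) → Fin m → Measure Z → ℝ
  | 0, _, _, F => F
  | q + 1, z, W, F =>
      tupleD (z 0) (W 0) (wordD q (fun i => z i.succ) (fun i => W i.succ) F)

/-- `Σ_{|W| = q} Q(D^{[W]}_{z_1,…,z_q}(F_1,…,F_m))`, the sum over all words of length `q`
in the alphabet of nonempty subsets of `[m]` of the product of the entries of
`D^{[W]}(F_1,…,F_m)`. -/
def wordSum {Z : Type*} [MeasurableSpace Z] {m : ℕ} (q : ℕ) (z : Fin q → Z)
    (F : Fin m → Measure Z → ℝ) : Measure Z → ℝ :=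
  fun χ =>
    ∑ W ∈ Finset.univ.filter (fun W : Fin q → Finset (Fin m) => ∀ ℓ, (W ℓ).Nonempty),
      ∏ i, wordD q z W F i χ

lemma addOneCost_prod {Z : Type*} [MeasurableSpace Z] {m : ℕ}
    (F : Fin m → Measure Z → ℝ) (z : Z) (χ : Measure Z) :
    addOneCost (fun χ' => ∏ i, F i χ') z χ =
      ∑ A ∈ Finset.univ.filter (fun A : Finset (Fin m) => A.Nonempty),
        ∏ i, tupleD z A F i χ := by
  have h1 : ∀ A : Finset (Fin m), ∏ i, tupleD z A F i χ =
      (∏ i ∈ A, addOneCost (F i) z χ) * ∏ i ∈ Aᶜ, F i χ := by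
    intro A
    rw [← Finset.prod_mul_prod_compl A (fun i => tupleD z A F i χ)]
    congr 1
    · exact Finset.prod_congr rfl fun i hi => by simp [tupleD, hi]
    · exact Finset.prod_congr rfl fun i hi => by
        simp [tupleD, Finset.mem_compl.mp hi]
  simp only [h1]
  have h2 : ∏ i, F i (χ + Measure.dirac z) =
      ∏ i, (addOneCost (F i) z χ + F i χ) := by
    apply Finset.prod_congr rfl
    intro i _
    simp [addOneCost]
  have h3 := Finset.prod_add (fun i => addOneCost (F i) z χ) (fun i => F i χ)
      (Finset.univ : Finset (Fin m))
  rw [show (addOneCost (fun χ' => ∏ i, F i χ') z χ) =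
      (∏ i, F i (χ + Measure.dirac z)) - ∏ i, F i χ from rfl, h2, h3]
  rw [Finset.powerset_univ]
  rw [← Finset.sum_filter_add_sum_filter_not Finset.univ
      (fun A : Finset (Fin m) => A.Nonempty)]
  have h4 : Finset.univ.filter (fun A : Finset (Fin m) => ¬ A.Nonempty) = {∅} := by
    ext A
    simp [Finset.not_nonempty_iff_eq_empty]
  rw [h4]
  have h5 : ∀ A : Finset (Fin m), Finset.univ \ A = Aᶜ := fun A => by
    ext i; simp
  simp only [h5]
  simp

lemma key {Z : Type*} [MeasurableSpace Z] {m : ℕ} (h : Fin m → Measure Z → ℝ) :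
    ∀ (q : ℕ) (z : Fin q → Z) (χ : Measure Z),
    iterD q z (fun χ' => ∏ i, h i χ') χ =
      ∑ W ∈ Finset.univ.filter (fun W : Fin q → Finset (Fin m) => ∀ ℓ, (W ℓ).Nonempty),
        ∏ i, wordD q z W h i χ
  | 0, z, χ => by
      have : (Finset.univ.filter
          (fun W : Fin 0 → Finset (Fin m) => ∀ ℓ, (W ℓ).Nonempty)) = Finset.univ := by
        ext W; simp [Fin.elim0]
      rw [this]
      simp [iterD, wordD, Finset.sum_const, Finset.card_univ]
  | q + 1, z, χ => by
      have IH : iterD q (fun i => z i.succ) (fun χ' => ∏ i, h i χ') =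
          fun χ' => ∑ W ∈ Finset.univ.filter
              (fun W : Fin q → Finset (Fin m) => ∀ ℓ, (W ℓ).Nonempty),
            ∏ i, wordD q (fun i => z i.succ) W h i χ' := by
        funext χ'
        exact key h q (fun i => z i.succ) χ'
      show addOneCost (iterD q (fun i => z i.succ) (fun χ' => ∏ i, h i χ')) (z 0) χ = _
      rw [IH]
      have lin : addOneCost (fun χ' => ∑ W ∈ Finset.univ.filter
            (fun W : Fin q → Finset (Fin m) => ∀ ℓ, (W ℓ).Nonempty),
          ∏ i, wordD q (fun i => z i.succ) W h i χ') (z 0) χ =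
          ∑ W ∈ Finset.univ.filter
            (fun W : Fin q → Finset (Fin m) => ∀ ℓ, (W ℓ).Nonempty),
          addOneCost (fun χ' => ∏ i, wordD q (fun i => z i.succ) W h i χ') (z 0) χ := by
        simp [addOneCost, Finset.sum_sub_distrib]
      rw [lin]
      have step : ∀ W : Fin q → Finset (Fin m),
          addOneCost (fun χ' => ∏ i, wordD q (fun i => z i.succ) W h i χ') (z 0) χ =
          ∑ A ∈ Finset.univ.filter (fun A : Finset (Fin m) => A.Nonempty),
            ∏ i, tupleD (z 0) A (wordD q (fun i => z i.succ) W h) i χ :=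
        fun W => addOneCost_prod _ _ _
      simp only [step]
      rw [← Finset.sum_product']
      apply Finset.sum_nbij' (fun p : (Fin q → Finset (Fin m)) × Finset (Fin m) =>
          Fin.cons p.2 p.1)
        (fun W : Fin (q+1) → Finset (Fin m) => (fun i => W i.succ, W 0))
      · intro p hp
        simp only [Finset.mem_product, Finset.mem_filter, Finset.mem_univ, true_and] at hp ⊢
        intro ℓ
        refine Fin.cases ?_ ?_ ℓ
        · simpa using hp.2
        · intro i; simpa using hp.1 i
      · intro W hW
        simp only [Finset.mem_filter, Finset.mem_univ, true_and] at hW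
        simp only [Finset.mem_product, Finset.mem_filter, Finset.mem_univ, true_and]
        exact ⟨fun i => hW i.succ, hW 0⟩
      · intro p hp
        simp
      · intro W hW
        funext ℓ
        refine Fin.cases ?_ ?_ ℓ <;> simp
      · intro p hp
        show _ = ∏ i, wordD (q+1) z (Fin.cons p.2 p.1) h i χ
        simp only [wordD, Fin.cons_zero, Fin.cons_succ]

/-- iterated add-one cost of a product, expressed as a sum over words in
the alphabet of nonempty subsets of `[m]`. -/
theorem iterD_prod_eq_wordSum
    {Z : Type*} [MeasurableSpace Z] (m : ℕ) (hm : 1 ≤ m)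
    (h : Fin m → Measure Z → ℝ)
    (q : ℕ) (hq : 1 ≤ q) (z : Fin q → Z) (χ : Measure Z) :
    iterD q z (fun χ' => ∏ i, h i χ') χ =
      ∑ W ∈ Finset.univ.filter (fun W : Fin q → Finset (Fin m) => ∀ ℓ, (W ℓ).Nonempty),
        ∏ i, wordD q z W h i χ := key h q z χ

end
end

section
/- Let η be a Poisson random measure on Z with σ-finite intensity μ. Let m ≥ 1, let k_1,…,k_m ≥ 0 be integers, and for i = 1,…,m let F_i := f_i(η) with f_i : M(Z) → ℝ measurable, such that for every ℓ > k_i and μ^ℓ-a.e. (z_1,…,z_ℓ) ∈ Z^ℓ one has D^{(ℓ)}_{z_1,…,z_ℓ} F_i = 0 ℙ-a.s. Let q ≥ 1 and let W = (A_1,…,A_q) be a word of length q in the alphabet of nonempty subsets of [m] such that d_i(W) := #{ℓ ∈ [q] : i ∈ A_ℓ} > k_i for some i ∈ [m]. Then for μ^q-a.e. (z_1,…,z_q) ∈ Z^q, Q(D^{[W]}_{z_1,…,z_q}(F_1,…,F_m)) = 0 ℙ-a.s. -/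
open MeasureTheory ProbabilityTheory ENNReal

noncomputable section

/-- Transfer an a.e. statement on `μ^c` to `μ^q` along precomposition with an
injective map `e : Fin c → Fin q`. -/
lemma ae_comp_inj {Z : Type*} [MeasurableSpace Z] (μ : Measure Z) [SigmaFinite μ]
    {c q : ℕ} (e : Fin c → Fin q) (he : Function.Injective e)
    {p : (Fin c → Z) → Prop}
    (hp : ∀ᵐ w ∂(Measure.pi fun _ : Fin c => μ), p w) :
    ∀ᵐ z ∂(Measure.pi fun _ : Fin q => μ), p (fun j => z (e j)) := by
  classical
  set N := toMeasurable (Measure.pi fun _ : Fin c => μ) {w | ¬ p w} with hNdef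
  have hNmeas : MeasurableSet N := measurableSet_toMeasurable _ _
  have hN0 : (Measure.pi fun _ : Fin c => μ) N = 0 := by
    rw [hNdef, measure_toMeasurable]; exact hp
  have hsubN : {w | ¬ p w} ⊆ N := subset_toMeasurable _ _
  let Pp : Fin q → Prop := fun ℓ => ℓ ∈ Set.range e
  let φ := MeasurableEquiv.piEquivPiSubtypeProd (fun _ : Fin q => Z) Pp
  have hφ := measurePreserving_piEquivPiSubtypeProd (fun _ : Fin q => μ) Pp
  let feq : Fin c ≃ {x // Pp x} := Equiv.ofInjective e he
  let g := MeasurableEquiv.piCongrLeft (fun _ : {x // Pp x} => Z) feq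
  have hg := measurePreserving_piCongrLeft (fun _ : {x // Pp x} => μ) feq
  let r : ({x // Pp x} → Z) → (Fin c → Z) := fun w j => w ⟨e j, ⟨j, rfl⟩⟩
  have hrmeas : Measurable r := measurable_pi_lambda _ fun j => measurable_pi_apply _
  have hrg : ∀ w : Fin c → Z, r (g w) = w := by
    intro w; funext j
    have h1 : (⟨e j, ⟨j, rfl⟩⟩ : {x // Pp x}) = feq j := rfl
    show (g w) ⟨e j, ⟨j, rfl⟩⟩ = w j
    rw [h1]
    show (MeasurableEquiv.piCongrLeft (fun _ : {x // Pp x} => Z) feq) w (feq j) = w j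
    rw [MeasurableEquiv.coe_piCongrLeft]
    exact Equiv.piCongrLeft_apply_apply (P := fun _ : {x // Pp x} => Z) (e := feq) w j
  set A : Set ({x // Pp x} → Z) := r ⁻¹' N with hAdef
  have hAmeas : MeasurableSet A := hrmeas hNmeas
  have hA0 : (Measure.pi fun _ : {x // Pp x} => μ) A = 0 := by
    rw [← hg.map_eq, MeasurableEquiv.map_apply]
    have : (⇑g) ⁻¹' A = N := by
      ext w
      simp only [Set.mem_preimage, hAdef, hrg w]
    rw [this, hN0]
  have hT0 : (Measure.pi fun _ : Fin q => μ) (φ ⁻¹' (A ×ˢ (Set.univ : Set ({x // ¬ Pp x} → Z)))) = 0 := by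
    rw [hφ.measure_preimage_equiv, Measure.prod_prod,
      show (Subtype.fintype Pp) = (Set.fintypeRange e) from Subsingleton.elim _ _]
    exact mul_eq_zero_of_left hA0 _
  refine (MeasureTheory.ae_iff).2 (measure_mono_null ?_ hT0)
  intro z hz
  simp only [Set.mem_setOf_eq] at hz
  have hmem : r (fun ℓ : {x // Pp x} => z ℓ) ∈ N := by
    have : r (fun ℓ : {x // Pp x} => z ℓ) = fun j => z (e j) := rfl
    rw [this]
    exact hsubN hz
  exact Set.mem_prod.2 ⟨hmem, Set.mem_univ _⟩

/-- The `i`-th component of the word operator is an iterated add-one cost along the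
subsequence of points at positions where `i` occurs in the word. -/
lemma wordD_component_eq_iterD {Z : Type*} [MeasurableSpace Z] {m : ℕ} (i : Fin m) :
    ∀ (q : ℕ) (W : Fin q → Finset (Fin m)),
      ∃ (c : ℕ) (e : Fin c → Fin q), Function.Injective e ∧
        c = (Finset.univ.filter fun ℓ => i ∈ W ℓ).card ∧
        ∀ (z : Fin q → Z) (F : Fin m → Measure Z → ℝ),
          wordD q z W F i = iterD c (fun j => z (e j)) (F i)
  | 0, W => ⟨0, Fin.elim0, fun j => j.elim0, by simp, fun z F => rfl⟩
  | q + 1, W => by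
    classical
    obtain ⟨c, e, he, hc, heq⟩ := wordD_component_eq_iterD (Z := Z) i q (fun ℓ => W ℓ.succ)
    have hcard : (Finset.univ.filter fun ℓ : Fin (q+1) => i ∈ W ℓ).card
        = (if i ∈ W 0 then 1 else 0)
          + (Finset.univ.filter fun ℓ : Fin q => i ∈ W ℓ.succ).card := by
      rw [Finset.card_filter, Finset.card_filter, Fin.sum_univ_succ]
    by_cases h0 : i ∈ W 0
    · refine ⟨c + 1, Fin.cases 0 (fun j => (e j).succ), ?_, ?_, ?_⟩
      · intro a b hab
        induction a using Fin.cases with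
        | zero =>
          induction b using Fin.cases with
          | zero => rfl
          | succ b =>
            simp only [Fin.cases_zero, Fin.cases_succ] at hab
            exact absurd hab.symm (Fin.succ_ne_zero _)
        | succ a =>
          induction b using Fin.cases with
          | zero =>
            simp only [Fin.cases_zero, Fin.cases_succ] at hab
            exact absurd hab (Fin.succ_ne_zero _)
          | succ b =>
            simp only [Fin.cases_succ] at hab
            exact congrArg Fin.succ (he (Fin.succ_injective _ hab))
      · rw [hcard, if_pos h0, ← hc]; omega
      · intro z F
        show tupleD (z 0) (W 0) (wordD q (fun ℓ => z ℓ.succ) (fun ℓ => W ℓ.succ) F) i = _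
        rw [tupleD]
        simp only [if_pos h0]
        rw [heq]
        show _ = addOneCost (iterD c (fun j => z ((Fin.cases 0 (fun j => (e j).succ) : Fin (c+1) → Fin (q+1)) j.succ)) (F i)) (z ((Fin.cases 0 (fun j => (e j).succ) : Fin (c+1) → Fin (q+1)) 0))
        simp only [Fin.cases_succ, Fin.cases_zero]
    · refine ⟨c, fun j => (e j).succ, fun a b hab => he (Fin.succ_injective _ hab), ?_, ?_⟩
      · rw [hcard, if_neg h0, ← hc]; omega
      · intro z F
        show tupleD (z 0) (W 0) (wordD q (fun ℓ => z ℓ.succ) (fun ℓ => W ℓ.succ) F) i = _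
        rw [tupleD]
        simp only [if_neg h0]
        exact heq _ F

/-- if a word `W` of length `q` uses the letter `i` more than `k_i`
times, then the corresponding product `Q(D^{[W]}(F_1,…,F_m))` vanishes. -/
theorem wordD_prod_eq_zero_of_overused_letter
    {Z Ω : Type*} [MeasurableSpace Z] [MeasurableSpace Ω]
    (P : Measure Ω) [IsProbabilityMeasure P] (μ : Measure Z) [SigmaFinite μ]
    (η : Ω → Measure Z) (hη : IsPoissonRM P η μ)
    (m : ℕ) (hm : 1 ≤ m) (k : Fin m → ℕ)
    (f : Fin m → Measure Z → ℝ) (hfmeas : ∀ i, Measurable (f i))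
    (hvanish : ∀ i, ∀ ℓ : ℕ, k i < ℓ →
      ∀ᵐ z ∂(Measure.pi fun _ : Fin ℓ => μ), ∀ᵐ ω ∂P, iterD ℓ z (f i) (η ω) = 0)
    (q : ℕ) (hq : 1 ≤ q) (W : Fin q → Finset (Fin m)) (hW : ∀ ℓ, (W ℓ).Nonempty)
    (i : Fin m)
    (hd : k i < (Finset.univ.filter (fun ℓ : Fin q => i ∈ W ℓ)).card) :
    ∀ᵐ z ∂(Measure.pi fun _ : Fin q => μ), ∀ᵐ ω ∂P,
      (∏ j, wordD q z W f j (η ω)) = 0 := by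
  classical
  obtain ⟨c, e, he, hc, heq⟩ := wordD_component_eq_iterD (Z := Z) i q W
  have hkc : k i < c := by rw [hc]; exact hd
  have h2 := ae_comp_inj μ e he (hvanish i c hkc)
  filter_upwards [h2] with z hz
  filter_upwards [hz] with ω hω
  refine Finset.prod_eq_zero (Finset.mem_univ i) ?_
  rw [heq z f]
  exact hω

end
end

section
/- Let Z be a measurable space, μ a σ-finite measure on Z, and let γ be a Poisson random measure on the product space {0,1} × Z with intensity ν given by ν(C) = μ({z : (0,z) ∈ C}) + μ({z : (1,z) ∈ C}) for measurable C ⊆ {0,1} × Z. For i = 0,1 define γ_i by γ_i(B) := γ({i} × B) for measurable B ⊆ Z. Then γ_0 and γ_1 are each Poisson random measures on Z with intensity μ, and they are independent, i.e., the σ-algebra generated by the family {γ_0(B) : B measurable} is independent of the σ-algebra generated by the family {γ_1(B) : B measurable}. -/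
open MeasureTheory ProbabilityTheory ENNReal

noncomputable section

section AuxPoissonMarginals

open Function MeasurableSpace

variable {Z : Type*} [MeasurableSpace Z]

lemma prodMk_image_eq (i : Fin 2) (B : Set Z) :
    (fun z => (i, z)) '' B = ({i} : Set (Fin 2)) ×ˢ B := by
  ext p
  constructor
  · rintro ⟨z, hz, rfl⟩; exact ⟨rfl, hz⟩
  · rintro ⟨hp1, hp2⟩
    exact ⟨p.2, hp2, by rw [← hp1]⟩

lemma comap_prodMk_apply (χ : Measure (Fin 2 × Z)) (i : Fin 2) {B : Set Z}
    (hB : MeasurableSet B) :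
    χ.comap (fun z => (i, z)) B = χ (({i} : Set (Fin 2)) ×ˢ B) := by
  rw [Measure.comap_apply _ (fun a b h => congrArg Prod.snd h)
    (fun s hs => by rw [prodMk_image_eq]; exact (measurableSet_singleton i).prod hs) _ hB,
    prodMk_image_eq]

lemma exists_refinement {W : Type*} [MeasurableSpace W] (n : ℕ) (D : Fin n → Set W)
    (hD : ∀ k, MeasurableSet (D k)) :
    ∃ (N : ℕ) (E : Fin N → Set W) (φ : (Fin N → ℝ≥0∞) → (Fin n → ℝ≥0∞)),
      (∀ j, MeasurableSet (E j)) ∧ Pairwise (Function.onFun Disjoint E) ∧ Measurable φ ∧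
      ∀ χ : Measure W, (fun k => χ (D k)) = φ (fun j => χ (E j)) := by
  classical
  let e : (Fin n → Bool) ≃ Fin (Fintype.card (Fin n → Bool)) := Fintype.equivFin _
  let atom : (Fin n → Bool) → Set W := fun a => ⋂ k, if a k then D k else (D k)ᶜ
  have hatom_meas : ∀ a, MeasurableSet (atom a) := by
    intro a
    refine MeasurableSet.iInter fun k => ?_
    by_cases h : a k <;> simp [h, hD k, (hD k).compl]
  have hatom_disj : ∀ a b, a ≠ b → Disjoint (atom a) (atom b) := by
    intro a b hab
    obtain ⟨k, hk⟩ := Function.ne_iff.mp hab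
    have h1 : atom a ⊆ (if a k then D k else (D k)ᶜ) := Set.iInter_subset _ k
    have h2 : atom b ⊆ (if b k then D k else (D k)ᶜ) := Set.iInter_subset _ k
    refine Set.disjoint_of_subset h1 h2 ?_
    cases ha : a k <;> cases hb : b k <;> simp_all [disjoint_compl_left, disjoint_compl_right]
  have hDk : ∀ (k : Fin n) (χ : Measure W),
      χ (D k) = ∑ j ∈ Finset.univ.filter (fun j => e.symm j k = true), χ (atom (e.symm j)) := by
    intro k χ
    have hset : D k = ⋃ j ∈ Finset.univ.filter (fun j => e.symm j k = true), atom (e.symm j) := by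
      ext z
      simp only [Set.mem_iUnion, Finset.mem_filter, Finset.mem_univ, true_and, exists_prop]
      constructor
      · intro hz
        refine ⟨e (fun k' => decide (z ∈ D k')), ?_, ?_⟩
        · simp [hz]
        · simp only [Equiv.symm_apply_apply, atom, Set.mem_iInter]
          intro k'
          by_cases h : z ∈ D k' <;> simp [h]
      · rintro ⟨j, hjk, hj⟩
        have h := Set.mem_iInter.mp hj k
        rwa [hjk, if_pos rfl] at h
    rw [hset, measure_biUnion_finset ?_ (fun j _ => hatom_meas _)]
    intro j hj j' hj' hne
    exact hatom_disj _ _ (fun h => hne (e.symm.injective h))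
  refine ⟨_, fun j => atom (e.symm j),
    fun v k => ∑ j ∈ Finset.univ.filter (fun j => e.symm j k = true), v j,
    fun j => hatom_meas _, ?_, ?_, ?_⟩
  · intro j j' hne
    exact hatom_disj _ _ (fun h => hne (e.symm.injective h))
  · exact measurable_pi_lambda _ fun k => Finset.measurable_sum _ fun j _ => measurable_pi_apply j
  · exact fun χ => funext fun k => hDk k χ

lemma measurable_eval_tuple {Ω : Type*} [mΩ : MeasurableSpace Ω] {W : Type*} [MeasurableSpace W]
    {ξ : Ω → Measure W} (hξ : Measurable ξ) {n : ℕ} {D : Fin n → Set W}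
    (hD : ∀ k, MeasurableSet (D k)) : Measurable fun ω => fun k => ξ ω (D k) :=
  measurable_pi_lambda _ fun k => (Measure.measurable_coe (hD k)).comp hξ

end AuxPoissonMarginals

/-- marking construction: the two marginal point processes of a Poisson
random measure on `{0,1} × Z` with marginal intensities `μ` are independent Poisson
random measures with intensity `μ`. -/
theorem poisson_marginals_independent
    {Z Ω : Type*} [MeasurableSpace Z] [MeasurableSpace Ω]
    (P : Measure Ω) [IsProbabilityMeasure P] (μ : Measure Z) [SigmaFinite μ]
    (ν : Measure (Fin 2 × Z))
    (hν : ∀ C : Set (Fin 2 × Z), MeasurableSet C →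
      ν C = μ {z | ((0 : Fin 2), z) ∈ C} + μ {z | ((1 : Fin 2), z) ∈ C})
    (γ : Ω → Measure (Fin 2 × Z)) (hγ : IsPoissonRM P γ ν) :
    IsPoissonRM P (fun ω => (γ ω).comap fun z => ((0 : Fin 2), z)) μ ∧
    IsPoissonRM P (fun ω => (γ ω).comap fun z => ((1 : Fin 2), z)) μ ∧
    IndepFun (fun ω => (γ ω).comap fun z => ((0 : Fin 2), z))
      (fun ω => (γ ω).comap fun z => ((1 : Fin 2), z)) P := by
  classical
  set g : Fin 2 → Ω → Measure Z := fun i ω => (γ ω).comap fun z => (i, z) with hg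
  -- evaluation of the marginals
  have heval : ∀ (i : Fin 2) {B : Set Z}, MeasurableSet B →
      (fun ω => g i ω B) = fun ω => γ ω (({i} : Set (Fin 2)) ×ˢ B) :=
    fun i _ hB => funext fun ω => comap_prodMk_apply (γ ω) i hB
  have hprodmeas : ∀ (i : Fin 2) {B : Set Z}, MeasurableSet B →
      MeasurableSet (({i} : Set (Fin 2)) ×ˢ B) :=
    fun i _ hB => (measurableSet_singleton i).prod hB
  -- intensity of the marginals
  have hνB : ∀ (i : Fin 2) (B : Set Z), MeasurableSet B →
      ν (({i} : Set (Fin 2)) ×ˢ B) = μ B := by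
    intro i B hB
    rw [hν _ (hprodmeas i hB)]
    have hi : i = 0 ∨ i = 1 := by
      rcases i with ⟨iv, hiv⟩
      interval_cases iv
      · exact Or.inl rfl
      · exact Or.inr rfl
    rcases hi with rfl | rfl
    · have h0 : {z : Z | ((0 : Fin 2), z) ∈ ({(0 : Fin 2)} : Set (Fin 2)) ×ˢ B} = B := by
        ext z; simp
      have h1 : {z : Z | ((1 : Fin 2), z) ∈ ({(0 : Fin 2)} : Set (Fin 2)) ×ˢ B}
          = (∅ : Set Z) := by
        ext z
        simp only [Set.mem_setOf_eq, Set.mem_prod, Set.mem_singleton_iff, Set.mem_empty_iff_false,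
          iff_false, not_and]
        intro h; exact absurd h (by decide)
      rw [h0, h1, measure_empty, add_zero]
    · have h0 : {z : Z | ((0 : Fin 2), z) ∈ ({(1 : Fin 2)} : Set (Fin 2)) ×ˢ B}
          = (∅ : Set Z) := by
        ext z
        simp only [Set.mem_setOf_eq, Set.mem_prod, Set.mem_singleton_iff, Set.mem_empty_iff_false,
          iff_false, not_and]
        intro h; exact absurd h (by decide)
      have h1 : {z : Z | ((1 : Fin 2), z) ∈ ({(1 : Fin 2)} : Set (Fin 2)) ×ˢ B} = B := by
        ext z; simp
      rw [h0, h1, measure_empty, zero_add]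
  -- the marginals are Poisson random measures
  have hmarg : ∀ i : Fin 2, IsPoissonRM P (g i) μ := by
    intro i
    constructor
    · intro B hB
      rw [heval i hB]
      exact hγ.meas _ (hprodmeas i hB)
    · intro n B hB hd
      have h := hγ.indep n (fun k => ({i} : Set (Fin 2)) ×ˢ B k)
        (fun k => hprodmeas i (hB k)) (fun k k' hne => Set.Disjoint.set_prod_right (hd hne) _ _)
      have he : (fun (k : Fin n) (ω : Ω) => g i ω (B k))
          = fun k ω => γ ω (({i} : Set (Fin 2)) ×ˢ B k) :=
        funext fun k => heval i (hB k)
      rw [he]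
      exact h
    · intro B hB hlt n
      have h1 : {ω | g i ω B = n} = {ω | γ ω (({i} : Set (Fin 2)) ×ˢ B) = n} := by
        ext ω
        simp only [Set.mem_setOf_eq, hg, comap_prodMk_apply (γ ω) i hB]
      rw [h1, ← hνB i B hB]
      exact hγ.poisson _ (hprodmeas i hB) (by rw [hνB i B hB]; exact hlt) n
    · intro B hB htop
      have h := hγ.ae_top _ (hprodmeas i hB) (by rw [hνB i B hB]; exact htop)
      filter_upwards [h] with ω hω
      rw [comap_prodMk_apply (γ ω) i hB]
      exact hω
  -- π-systems generating the σ-algebras of the marginals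
  set Ci : Fin 2 → Set (Set Ω) := fun i =>
    {s | ∃ (n : ℕ) (D : Fin n → Set Z) (T : Set (Fin n → ℝ≥0∞)),
      (∀ k, MeasurableSet (D k)) ∧ MeasurableSet T ∧
      s = (fun ω => fun k => γ ω (({i} : Set (Fin 2)) ×ˢ D k)) ⁻¹' T} with hCi
  have hpi : ∀ i, IsPiSystem (Ci i) := by
    intro i s hs t ht _
    obtain ⟨n, D, T, hD, hT, rfl⟩ := hs
    obtain ⟨n', D', T', hD', hT', rfl⟩ := ht
    refine ⟨n + n', Fin.append D D',
      {v | (fun k => v (Fin.castAdd n' k)) ∈ T ∧ (fun k => v (Fin.natAdd n k)) ∈ T'},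
      fun k => ?_, ?_, ?_⟩
    · refine Fin.addCases (motive := fun k => MeasurableSet (Fin.append D D' k)) ?_ ?_ k
      · intro k'; rw [Fin.append_left]; exact hD k'
      · intro k'; rw [Fin.append_right]; exact hD' k'
    · exact (hT.preimage (measurable_pi_lambda _ fun k => measurable_pi_apply _)).inter
        (hT'.preimage (measurable_pi_lambda _ fun k => measurable_pi_apply _))
    · ext ω
      simp only [Set.mem_inter_iff, Set.mem_preimage, Set.mem_setOf_eq, Fin.append_left,
        Fin.append_right]
  have hgen : ∀ i : Fin 2,
      MeasurableSpace.comap (g i) inferInstance = MeasurableSpace.generateFrom (Ci i) := by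
    intro i
    apply le_antisymm
    · rw [← measurable_iff_comap_le]
      refine @Measure.measurable_of_measurable_coe Z Ω _ (MeasurableSpace.generateFrom (Ci i))
        _ fun B hB => ?_
      intro T hT
      apply MeasurableSpace.measurableSet_generateFrom
      refine ⟨1, fun _ => B, (fun v : Fin 1 → ℝ≥0∞ => v 0) ⁻¹' T, fun _ => hB,
        hT.preimage (measurable_pi_apply 0), ?_⟩
      ext ω
      simp only [Set.mem_preimage, hg, comap_prodMk_apply (γ ω) i hB]
    · refine MeasurableSpace.generateFrom_le ?_
      rintro s ⟨n, D, T, hD, hT, rfl⟩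
      have he : (fun ω => fun k => g i ω (D k))
          = fun ω => fun k => γ ω (({i} : Set (Fin 2)) ×ˢ D k) :=
        funext fun ω => funext fun k => comap_prodMk_apply (γ ω) i (hD k)
      rw [← he]
      exact (@measurable_eval_tuple Ω (MeasurableSpace.comap (g i) inferInstance) Z _ (g i)
        (Measurable.of_comap_le le_rfl) n D hD) hT
  -- independence of the generating π-systems
  have hsets : IndepSets (Ci 0) (Ci 1) P := by
    rw [IndepSets_iff]
    rintro s t ⟨n₀, D₀, T₀, hD₀, hT₀, rfl⟩ ⟨n₁, D₁, T₁, hD₁, hT₁, rfl⟩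
    obtain ⟨N₀, E₀, φ₀, hE₀, hE₀d, hφ₀, hkey₀⟩ := exists_refinement n₀ D₀ hD₀
    obtain ⟨N₁, E₁, φ₁, hE₁, hE₁d, hφ₁, hkey₁⟩ := exists_refinement n₁ D₁ hD₁
    set C : Fin (N₀ + N₁) → Set (Fin 2 × Z) :=
      Fin.append (fun j => ({0} : Set (Fin 2)) ×ˢ E₀ j)
        (fun j => ({1} : Set (Fin 2)) ×ˢ E₁ j) with hC
    have hCmeas : ∀ j, MeasurableSet (C j) := by
      intro j
      refine Fin.addCases (motive := fun j => MeasurableSet (C j)) ?_ ?_ j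
      · intro j'; rw [hC, Fin.append_left]; exact hprodmeas 0 (hE₀ j')
      · intro j'; rw [hC, Fin.append_right]; exact hprodmeas 1 (hE₁ j')
    have hzero_one : Disjoint ({0} : Set (Fin 2)) ({1} : Set (Fin 2)) := by
      simp [Set.disjoint_singleton]
    have hCdisj : Pairwise (Function.onFun Disjoint C) := by
      intro j j' hne
      refine Fin.addCases
        (motive := fun j => ∀ j' : Fin (N₀ + N₁), j ≠ j' → Disjoint (C j) (C j')) ?_ ?_ j j' hne
      · intro a j'
        refine Fin.addCases
          (motive := fun j' => Fin.castAdd N₁ a ≠ j' → Disjoint (C (Fin.castAdd N₁ a)) (C j'))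
          ?_ ?_ j'
        · intro b hab
          rw [hC]
          simp only [Fin.append_left]
          refine Set.Disjoint.set_prod_right (hE₀d (fun h => hab ?_)) _ _
          rw [h]
        · intro b _
          rw [hC]
          simp only [Fin.append_left, Fin.append_right]
          exact Set.Disjoint.set_prod_left hzero_one _ _
      · intro a j'
        refine Fin.addCases
          (motive := fun j' => Fin.natAdd N₀ a ≠ j' → Disjoint (C (Fin.natAdd N₀ a)) (C j'))
          ?_ ?_ j'
        · intro b _
          rw [hC]
          simp only [Fin.append_left, Fin.append_right]
          exact Set.Disjoint.set_prod_left hzero_one.symm _ _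
        · intro b hab
          rw [hC]
          simp only [Fin.append_right]
          refine Set.Disjoint.set_prod_right (hE₁d (fun h => hab ?_)) _ _
          rw [h]
    have hind := hγ.indep (N₀ + N₁) C hCmeas hCdisj
    -- split into the two blocks
    set S : Finset (Fin (N₀ + N₁)) :=
      Finset.univ.map ⟨Fin.castAdd N₁, fun a b h => Fin.ext (by simpa using congrArg Fin.val h)⟩
      with hS
    set T : Finset (Fin (N₀ + N₁)) :=
      Finset.univ.map ⟨Fin.natAdd N₀, fun a b h => Fin.ext (by simpa using congrArg Fin.val h)⟩
      with hT
    have hST : Disjoint S T := by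
      rw [Finset.disjoint_left]
      intro j hjS hjT
      rw [hS, Finset.mem_map] at hjS
      rw [hT, Finset.mem_map] at hjT
      obtain ⟨a, -, ha⟩ := hjS
      obtain ⟨b, -, hb⟩ := hjT
      have hav : (a : ℕ) = (j : ℕ) := by rw [← ha]; rfl
      have hbv : N₀ + (b : ℕ) = (j : ℕ) := by rw [← hb]; rfl
      omega
    have hIF := hind.indepFun_finset S T hST (fun j => hγ.meas _ (hCmeas j))
    have hσ0mem : ∀ k : Fin N₀, Fin.castAdd N₁ k ∈ S := by
      intro k; rw [hS, Finset.mem_map]; exact ⟨k, Finset.mem_univ k, rfl⟩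
    have hσ1mem : ∀ k : Fin N₁, Fin.natAdd N₀ k ∈ T := by
      intro k; rw [hT, Finset.mem_map]; exact ⟨k, Finset.mem_univ k, rfl⟩
    set q₀ : (∀ _ : ↥S, ℝ≥0∞) → (Fin N₀ → ℝ≥0∞) :=
      fun v k => v ⟨Fin.castAdd N₁ k, hσ0mem k⟩ with hq₀
    set q₁ : (∀ _ : ↥T, ℝ≥0∞) → (Fin N₁ → ℝ≥0∞) :=
      fun v k => v ⟨Fin.natAdd N₀ k, hσ1mem k⟩ with hq₁
    have hIF2 := hIF.comp (φ := q₀) (ψ := q₁)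
      (measurable_pi_lambda _ fun k => measurable_pi_apply _)
      (measurable_pi_lambda _ fun k => measurable_pi_apply _)
    have hh0 : (q₀ ∘ fun ω (j : ↥S) => γ ω (C j.1))
        = fun ω => fun j => γ ω (({0} : Set (Fin 2)) ×ˢ E₀ j) := by
      funext ω k
      simp only [Function.comp_apply, hq₀, hC, Fin.append_left]
    have hh1 : (q₁ ∘ fun ω (j : ↥T) => γ ω (C j.1))
        = fun ω => fun j => γ ω (({1} : Set (Fin 2)) ×ˢ E₁ j) := by
      funext ω k
      simp only [Function.comp_apply, hq₁, hC, Fin.append_right]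
    rw [hh0, hh1] at hIF2
    -- rewrite the events through the refinement
    have keyF0 : ∀ ω, (fun k => γ ω (({(0 : Fin 2)} : Set (Fin 2)) ×ˢ D₀ k))
        = φ₀ (fun j => γ ω (({(0 : Fin 2)} : Set (Fin 2)) ×ˢ E₀ j)) := by
      intro ω
      calc (fun k => γ ω (({(0 : Fin 2)} : Set (Fin 2)) ×ˢ D₀ k))
          = fun k => ((γ ω).comap fun z => ((0 : Fin 2), z)) (D₀ k) := by
            funext k; rw [comap_prodMk_apply _ _ (hD₀ k)]
        _ = φ₀ (fun j => ((γ ω).comap fun z => ((0 : Fin 2), z)) (E₀ j)) := hkey₀ _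
        _ = φ₀ (fun j => γ ω (({(0 : Fin 2)} : Set (Fin 2)) ×ˢ E₀ j)) := by
            have he : (fun j => ((γ ω).comap fun z => ((0 : Fin 2), z)) (E₀ j))
                = fun j => γ ω (({(0 : Fin 2)} : Set (Fin 2)) ×ˢ E₀ j) :=
              funext fun j => comap_prodMk_apply _ _ (hE₀ j)
            rw [he]
    have keyF1 : ∀ ω, (fun k => γ ω (({(1 : Fin 2)} : Set (Fin 2)) ×ˢ D₁ k))
        = φ₁ (fun j => γ ω (({(1 : Fin 2)} : Set (Fin 2)) ×ˢ E₁ j)) := by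
      intro ω
      calc (fun k => γ ω (({(1 : Fin 2)} : Set (Fin 2)) ×ˢ D₁ k))
          = fun k => ((γ ω).comap fun z => ((1 : Fin 2), z)) (D₁ k) := by
            funext k; rw [comap_prodMk_apply _ _ (hD₁ k)]
        _ = φ₁ (fun j => ((γ ω).comap fun z => ((1 : Fin 2), z)) (E₁ j)) := hkey₁ _
        _ = φ₁ (fun j => γ ω (({(1 : Fin 2)} : Set (Fin 2)) ×ˢ E₁ j)) := by
            have he : (fun j => ((γ ω).comap fun z => ((1 : Fin 2), z)) (E₁ j))
                = fun j => γ ω (({(1 : Fin 2)} : Set (Fin 2)) ×ˢ E₁ j) :=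
              funext fun j => comap_prodMk_apply _ _ (hE₁ j)
            rw [he]
    have hs0 : ((fun ω => fun k => γ ω (({(0 : Fin 2)} : Set (Fin 2)) ×ˢ D₀ k)) ⁻¹' T₀)
        = (fun ω => fun j => γ ω (({(0 : Fin 2)} : Set (Fin 2)) ×ˢ E₀ j)) ⁻¹' (φ₀ ⁻¹' T₀) := by
      ext ω
      simp only [Set.mem_preimage, keyF0 ω]
    have hs1 : ((fun ω => fun k => γ ω (({(1 : Fin 2)} : Set (Fin 2)) ×ˢ D₁ k)) ⁻¹' T₁)
        = (fun ω => fun j => γ ω (({(1 : Fin 2)} : Set (Fin 2)) ×ˢ E₁ j)) ⁻¹' (φ₁ ⁻¹' T₁) := by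
      ext ω
      simp only [Set.mem_preimage, keyF1 ω]
    rw [hs0, hs1]
    exact hIF2.measure_inter_preimage_eq_mul _ _ (hφ₀ hT₀) (hφ₁ hT₁)
  -- measurability of the marginals (as maps to the space of measures)
  have hgmeas : ∀ i : Fin 2, Measurable (g i) := by
    intro i
    refine Measure.measurable_of_measurable_coe _ fun B hB => ?_
    rw [heval i hB]
    exact hγ.meas _ (hprodmeas i hB)
  have hIndep : Indep (MeasurableSpace.comap (g 0) inferInstance)
      (MeasurableSpace.comap (g 1) inferInstance) P :=
    IndepSets.indep (hgmeas 0).comap_le (hgmeas 1).comap_le (hpi 0) (hpi 1)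
      (hgen 0) (hgen 1) hsets
  exact ⟨hmarg 0, hmarg 1, hIndep⟩

end
end
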